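/- Let g : ℝ → ℝ be C¹ and a < ū < b. Then for all u₁, u₂ ∈ [a, ū] with u₁ < u₂, the increment of the derivative of the convex envelope on the smaller interval dominates that on the larger interval: (conv_{[a,ū]} g)'(u₂) − (conv_{[a,ū]} g)'(u₁) ≥ (conv_{[a,b]} g)'(u₂) − (conv_{[a,b]} g)'(u₁). (Derivatives at endpoints are one-sided.) -/

import Mathlib

open Set Filter Topology

/-- The convex envelope of `g` on the interval `[a,b]`: the pointwise supremum of all
convex functions on `[a,b]` lying below `g` on `[a,b]`. -/
noncomputable def convEnv (a b : ℝ) (g : ℝ → ℝ) : ℝ → ℝ :=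
  fun u => sSup {y : ℝ | ∃ h : ℝ → ℝ, ConvexOn ℝ (Set.Icc a b) h ∧
    (∀ x ∈ Set.Icc a b, h x ≤ g x) ∧ y = h u}

section Basic

variable {g : ℝ → ℝ} {a b : ℝ}

lemma envSet_nonempty (hab : a ≤ b) (hg : Continuous g) (u : ℝ) :
    {y : ℝ | ∃ h : ℝ → ℝ, ConvexOn ℝ (Set.Icc a b) h ∧
      (∀ x ∈ Set.Icc a b, h x ≤ g x) ∧ y = h u}.Nonempty := by
  obtain ⟨x₀, hx₀, hmin⟩ := (isCompact_Icc (a := a) (b := b)).exists_isMinOn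
    (nonempty_Icc.2 hab) hg.continuousOn
  exact ⟨g x₀, fun _ => g x₀, convexOn_const _ (convex_Icc a b),
    fun x hx => isMinOn_iff.1 hmin x hx, rfl⟩

lemma envSet_bddAbove {u : ℝ} (hu : u ∈ Set.Icc a b) :
    BddAbove {y : ℝ | ∃ h : ℝ → ℝ, ConvexOn ℝ (Set.Icc a b) h ∧
      (∀ x ∈ Set.Icc a b, h x ≤ g x) ∧ y = h u} := by
  refine ⟨g u, ?_⟩
  rintro y ⟨h, _, hle, rfl⟩
  exact hle u hu

lemma le_convEnv {h : ℝ → ℝ} (hconv : ConvexOn ℝ (Set.Icc a b) h)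
    (hle : ∀ x ∈ Set.Icc a b, h x ≤ g x) {u : ℝ} (hu : u ∈ Set.Icc a b) :
    h u ≤ convEnv a b g u :=
  le_csSup (envSet_bddAbove hu) ⟨h, hconv, hle, rfl⟩

lemma convEnv_le (hab : a ≤ b) (hg : Continuous g) {u : ℝ} (hu : u ∈ Set.Icc a b) :
    convEnv a b g u ≤ g u := by
  refine csSup_le (envSet_nonempty hab hg u) ?_
  rintro y ⟨h, _, hle, rfl⟩
  exact hle u hu

lemma convEnv_convexOn (hab : a ≤ b) (hg : Continuous g) :
    ConvexOn ℝ (Set.Icc a b) (convEnv a b g) := by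
  refine ⟨convex_Icc a b, fun x hx y hy p q hp hq hpq => ?_⟩
  refine csSup_le (envSet_nonempty hab hg _) ?_
  rintro r ⟨h, hconv, hle, rfl⟩
  calc h (p • x + q • y) ≤ p • h x + q • h y := hconv.2 hx hy hp hq hpq
    _ ≤ p • convEnv a b g x + q • convEnv a b g y := by
        simp only [smul_eq_mul]
        have h1 := le_convEnv hconv hle hx
        have h2 := le_convEnv hconv hle hy
        nlinarith

lemma convEnv_left_endpoint (hab : a ≤ b) (hg : Continuous g) :
    convEnv a b g a = g a := by
  set E := convEnv a b g with hE
  set h : ℝ → ℝ := fun u => if u = a then g a else E u with hh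
  have hle : ∀ x ∈ Set.Icc a b, h x ≤ g x := by
    intro x hx
    by_cases hxa : x = a
    · simp [hh, hxa]
    · simp only [hh, if_neg hxa]
      exact convEnv_le hab hg hx
  have hEh : ∀ u ∈ Set.Icc a b, E u ≤ h u := by
    intro u hu
    by_cases hua : u = a
    · subst hua; simp only [hh, if_pos rfl]; exact convEnv_le hab hg hu
    · simp [hh, hua]
  have hconv : ConvexOn ℝ (Set.Icc a b) h := by
    refine ⟨convex_Icc a b, fun x hx y hy p q hp hq hpq => ?_⟩
    simp only [smul_eq_mul]
    by_cases hz : p * x + q * y = a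
    · rw [hz]
      simp only [hh, if_pos rfl]
      have hx1 : a ≤ x := hx.1
      have hy1 : a ≤ y := hy.1
      have hsum : p * (x - a) + q * (y - a) = 0 := by
        have e : p * (x - a) + q * (y - a) = p * x + q * y - (p + q) * a := by ring
        rw [e, hpq, hz]; ring
      have e1 : p * (x - a) = 0 := by
        nlinarith [mul_nonneg hp (sub_nonneg.2 hx1), mul_nonneg hq (sub_nonneg.2 hy1)]
      have e2 : q * (y - a) = 0 := by
        nlinarith [mul_nonneg hp (sub_nonneg.2 hx1), mul_nonneg hq (sub_nonneg.2 hy1)]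
      rcases eq_or_lt_of_le hp with hp0 | hp0
      · have hq1 : q = 1 := by linarith
        have hya : y = a := by nlinarith
        rw [← hp0, hq1, hya]; simp [hh]
      · have hxa : x = a := by nlinarith
        rcases eq_or_lt_of_le hq with hq0 | hq0
        · have hp1 : p = 1 := by linarith
          rw [← hq0, hp1, hxa]; simp [hh]
        · have hya : y = a := by nlinarith
          rw [hxa, hya]
          simp only [hh, if_pos rfl]
          calc g a = (p + q) * g a := by rw [hpq]; ring
            _ = p * g a + q * g a := by ring
            _ ≤ p * g a + q * g a := le_rfl
    · have hzI : p * x + q * y ∈ Set.Icc a b := by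
        have := (convex_Icc a b) hx hy hp hq hpq
        simpa [smul_eq_mul] using this
      have step : h (p * x + q * y) = E (p * x + q * y) := by simp [hh, hz]
      rw [step]
      have hEc := (convEnv_convexOn hab hg).2 hx hy hp hq hpq
      simp only [smul_eq_mul] at hEc
      calc E (p * x + q * y) ≤ p * E x + q * E y := hEc
        _ ≤ p * h x + q * h y := by nlinarith [hEh x hx, hEh y hy]
  have h1 : g a ≤ E a := by
    have := le_convEnv hconv hle (left_mem_Icc.2 hab)
    simpa [hh] using this
  exact le_antisymm (convEnv_le hab hg (left_mem_Icc.2 hab)) h1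

lemma convEnv_anti {b' : ℝ} (hab : a ≤ b') (hb' : b' ≤ b) (hg : Continuous g)
    {u : ℝ} (hu : u ∈ Set.Icc a b') :
    convEnv a b g u ≤ convEnv a b' g u := by
  refine csSup_le (envSet_nonempty (hab.trans hb') hg u) ?_
  rintro r ⟨h, hconv, hle, rfl⟩
  exact le_convEnv (hconv.subset (Icc_subset_Icc le_rfl hb') (convex_Icc _ _))
    (fun x hx => hle x (Icc_subset_Icc le_rfl hb' hx)) hu

end Basic

section Calc

variable {F : ℝ → ℝ} {α β : ℝ}

lemma ioo_nhds_neBot_left {x y : ℝ} (hxy : x < y) : (𝓝[Set.Ioo x y] x).NeBot :=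
  mem_closure_iff_nhdsWithin_neBot.1 (by rw [closure_Ioo hxy.ne]; exact left_mem_Icc.2 hxy.le)

lemma ioo_nhds_neBot_right {x y : ℝ} (hxy : x < y) : (𝓝[Set.Ioo x y] y).NeBot :=
  mem_closure_iff_nhdsWithin_neBot.1 (by rw [closure_Ioo hxy.ne]; exact right_mem_Icc.2 hxy.le)

lemma deriv_le_slope (hF : ConvexOn ℝ (Set.Icc α β) F) {x y mx : ℝ}
    (hx : x ∈ Set.Icc α β) (hy : y ∈ Set.Icc α β) (hxy : x < y)
    (hd : HasDerivWithinAt F mx (Set.Icc α β) x) :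
    mx ≤ (F y - F x) / (y - x) := by
  have h1 : Filter.Tendsto (slope F x) (𝓝[Set.Icc α β \ {x}] x) (𝓝 mx) :=
    hasDerivWithinAt_iff_tendsto_slope.1 hd
  have hsub : Set.Ioo x y ⊆ Set.Icc α β \ {x} := fun t ht =>
    ⟨⟨hx.1.trans ht.1.le, ht.2.le.trans hy.2⟩, (ne_of_gt ht.1)⟩
  have h2 : Filter.Tendsto (slope F x) (𝓝[Set.Ioo x y] x) (𝓝 mx) :=
    h1.mono_left (nhdsWithin_mono _ hsub)
  have := ioo_nhds_neBot_left hxy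
  refine le_of_tendsto h2 ?_
  filter_upwards [eventually_mem_nhdsWithin] with t ht
  rw [slope_def_field]
  have htI : t ∈ Set.Icc α β := ⟨hx.1.trans ht.1.le, ht.2.le.trans hy.2⟩
  exact hF.secant_mono hx htI hy (ne_of_gt ht.1) (ne_of_gt hxy) ht.2.le

lemma slope_le_deriv (hF : ConvexOn ℝ (Set.Icc α β) F) {x y my : ℝ}
    (hx : x ∈ Set.Icc α β) (hy : y ∈ Set.Icc α β) (hxy : x < y)
    (hd : HasDerivWithinAt F my (Set.Icc α β) y) :
    (F y - F x) / (y - x) ≤ my := by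
  have h1 : Filter.Tendsto (slope F y) (𝓝[Set.Icc α β \ {y}] y) (𝓝 my) :=
    hasDerivWithinAt_iff_tendsto_slope.1 hd
  have hsub : Set.Ioo x y ⊆ Set.Icc α β \ {y} := fun t ht =>
    ⟨⟨hx.1.trans ht.1.le, ht.2.le.trans hy.2⟩, (ne_of_lt ht.2)⟩
  have h2 : Filter.Tendsto (slope F y) (𝓝[Set.Ioo x y] y) (𝓝 my) :=
    h1.mono_left (nhdsWithin_mono _ hsub)
  have := ioo_nhds_neBot_right hxy
  refine ge_of_tendsto h2 ?_
  filter_upwards [eventually_mem_nhdsWithin] with t ht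
  rw [slope_def_field]
  have htI : t ∈ Set.Icc α β := ⟨hx.1.trans ht.1.le, ht.2.le.trans hy.2⟩
  have key := hF.secant_mono hy hx htI (ne_of_lt hxy) (ne_of_lt ht.2) ht.1.le
  have e : (F x - F y) / (x - y) = (F y - F x) / (y - x) := by
    rw [← neg_div_neg_eq]; ring_nf
  rw [e] at key
  exact key

lemma deriv_mono (hF : ConvexOn ℝ (Set.Icc α β) F) {x y mx my : ℝ}
    (hx : x ∈ Set.Icc α β) (hy : y ∈ Set.Icc α β) (hxy : x < y)
    (hdx : HasDerivWithinAt F mx (Set.Icc α β) x)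
    (hdy : HasDerivWithinAt F my (Set.Icc α β) y) : mx ≤ my :=
  (deriv_le_slope hF hx hy hxy hdx).trans (slope_le_deriv hF hx hy hxy hdy)

lemma support_line (hF : ConvexOn ℝ (Set.Icc α β) F) {x mx : ℝ}
    (hx : x ∈ Set.Icc α β) (hd : HasDerivWithinAt F mx (Set.Icc α β) x) :
    ∀ u ∈ Set.Icc α β, F x + mx * (u - x) ≤ F u := by
  intro u hu
  rcases lt_trichotomy u x with h | h | h
  · have hs := slope_le_deriv hF hu hx h hd
    rw [div_le_iff₀ (by linarith : (0:ℝ) < x - u)] at hs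
    linarith
  · rw [h]; simp
  · have hs := deriv_le_slope hF hx hu h hd
    rw [le_div_iff₀ (by linarith : (0:ℝ) < u - x)] at hs
    linarith

lemma affine_of_deriv_eq (hF : ConvexOn ℝ (Set.Icc α β) F) {x y mx my : ℝ}
    (hx : x ∈ Set.Icc α β) (hy : y ∈ Set.Icc α β) (hxy : x < y)
    (hdx : HasDerivWithinAt F mx (Set.Icc α β) x)
    (hdy : HasDerivWithinAt F my (Set.Icc α β) y)
    (he : mx = my) : ∀ u ∈ Set.Icc x y, F u = F x + mx * (u - x) := by
  intro u hu
  rcases eq_or_lt_of_le hu.1 with h | hxu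
  · rw [← h]; simp
  have huI : u ∈ Set.Icc α β := ⟨hx.1.trans hu.1, hu.2.trans hy.2⟩
  have hA : mx ≤ (F u - F x) / (u - x) := deriv_le_slope hF hx huI hxu hdx
  have hB : (F u - F x) / (u - x) ≤ my := by
    rcases eq_or_lt_of_le hu.2 with h | huy
    · rw [h]; exact slope_le_deriv hF hx hy hxy hdy
    · have adj := hF.slope_mono_adjacent hx hy hxu huy
      exact adj.trans (slope_le_deriv hF huI hy huy hdy)
  have heq : (F u - F x) / (u - x) = mx := le_antisymm (he ▸ hB) hA
  rw [div_eq_iff (by linarith : u - x ≠ 0)] at heq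
  linarith

lemma deriv_of_affine {x y k s mx my : ℝ} (hxy : x < y)
    (hsub : Set.Icc x y ⊆ Set.Icc α β)
    (hdx : HasDerivWithinAt F mx (Set.Icc α β) x)
    (hdy : HasDerivWithinAt F my (Set.Icc α β) y)
    (haff : ∀ u ∈ Set.Icc x y, F u = k + s * u) : mx = s ∧ my = s := by
  have hud : UniqueDiffOn ℝ (Set.Icc x y) := uniqueDiffOn_Icc hxy
  have hl : ∀ z mz, z ∈ Set.Icc x y → HasDerivWithinAt F mz (Set.Icc α β) z → mz = s := by
    intro z mz hz hd
    have h1 : HasDerivWithinAt F mz (Set.Icc x y) z := hd.mono hsub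
    have h2 : HasDerivWithinAt (fun u => k + s * u) s (Set.Icc x y) z := by
      simpa using (((hasDerivAt_id z).const_mul s).const_add k).hasDerivWithinAt
    have h3 : HasDerivWithinAt F s (Set.Icc x y) z :=
      h2.congr (fun u hu => haff u hu) (haff z hz)
    rw [← h1.derivWithin (hud z hz), h3.derivWithin (hud z hz)]
  exact ⟨hl x mx ⟨le_rfl, hxy.le⟩ hdx, hl y my ⟨hxy.le, le_rfl⟩ hdy⟩

lemma deriv_eq_of_eqOn {F1 F2 : ℝ → ℝ} {s t : Set ℝ} {p q u m1 m2 : ℝ} (hpq : p < q)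
    (hs : Set.Icc p q ⊆ s) (ht : Set.Icc p q ⊆ t) (hu : u ∈ Set.Icc p q)
    (h1 : HasDerivWithinAt F1 m1 s u) (h2 : HasDerivWithinAt F2 m2 t u)
    (heq : ∀ v ∈ Set.Icc p q, F1 v = F2 v) : m1 = m2 := by
  have hud := uniqueDiffOn_Icc hpq u hu
  have h1' : HasDerivWithinAt F1 m1 (Set.Icc p q) u := h1.mono hs
  have h2' : HasDerivWithinAt F2 m2 (Set.Icc p q) u := h2.mono ht
  have h2'' : HasDerivWithinAt F1 m2 (Set.Icc p q) u := h2'.congr heq (heq u hu)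
  rw [← h1'.derivWithin hud, h2''.derivWithin hud]

lemma convexOn_le_line {S : Set ℝ} (hF : ConvexOn ℝ S F) {y x : ℝ} (hy : y ∈ S) (hx : x ∈ S)
    (hyx : y < x) {k s : ℝ} (hFy : F y = k + s * y) (hFx : F x = k + s * x) :
    ∀ u ∈ Set.Icc y x, F u ≤ k + s * u := by
  intro u hu
  have hxy0 : 0 < x - y := by linarith
  set p := (x - u) / (x - y) with hp'
  set q := (u - y) / (x - y) with hq'
  have hp : 0 ≤ p := div_nonneg (by linarith [hu.2]) hxy0.le
  have hq : 0 ≤ q := div_nonneg (by linarith [hu.1]) hxy0.le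
  have hpq : p + q = 1 := by rw [hp', hq']; field_simp; ring
  have hu' : p • y + q • x = u := by
    simp only [smul_eq_mul, hp', hq']; field_simp; ring
  have hc := hF.2 hy hx hp hq hpq
  rw [hu'] at hc
  simp only [smul_eq_mul] at hc
  calc F u ≤ p * F y + q * F x := hc
    _ = k + s * u := by
        rw [hFy, hFx, hp', hq']; field_simp; ring

lemma convexOn_affine {k s : ℝ} {S : Set ℝ} (hS : Convex ℝ S) :
    ConvexOn ℝ S (fun u => k + s * u) := by
  refine ⟨hS, fun x _ y _ p q hp hq hpq => ?_⟩
  simp only [smul_eq_mul]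
  have : p * (k + s * x) + q * (k + s * y) = (p + q) * k + s * (p * x + q * y) := by ring
  rw [this, hpq]; ring_nf; rfl

end Calc

section Glue

lemma glue_convexOn {a d b s : ℝ} {f h : ℝ → ℝ} (had : a ≤ d) (hdb : d ≤ b)
    (hf : ConvexOn ℝ (Set.Icc a d) f) (hh : ConvexOn ℝ (Set.Icc d b) h) (hfd : f d = h d)
    (hsf : ∀ x ∈ Set.Icc a d, f d + s * (x - d) ≤ f x)
    (hsh : ∀ y ∈ Set.Icc d b, h d + s * (y - d) ≤ h y) :
    ConvexOn ℝ (Set.Icc a b) (fun u => if u ≤ d then f u else h u) := by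
  set H : ℝ → ℝ := fun u => if u ≤ d then f u else h u with hH
  rw [convexOn_iff_slope_mono_adjacent]
  refine ⟨convex_Icc a b, ?_⟩
  intro x y z hx hz hxy hyz
  have Hle : ∀ u, u ≤ d → H u = f u := fun u hu => if_pos hu
  have Hgt : ∀ u, d < u → H u = h u := fun u hu => if_neg (not_le.2 hu)
  -- claim 1 : slopes within [a,d] are ≤ s
  have c1 : ∀ u v, a ≤ u → u < v → v ≤ d → (f v - f u) / (v - u) ≤ s := by
    intro u v hau huv hvd
    have huI : u ∈ Set.Icc a d := ⟨hau, huv.le.trans hvd⟩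
    have hvI : v ∈ Set.Icc a d := ⟨hau.trans huv.le, hvd⟩
    have hud : u < d := lt_of_lt_of_le huv hvd
    have e1 : (f v - f u) / (v - u) ≤ (f d - f u) / (d - u) :=
      hf.secant_mono huI hvI (right_mem_Icc.2 had) (ne_of_gt huv) (ne_of_gt hud) hvd
    have e2 : (f d - f u) / (d - u) ≤ s := by
      have := hsf u huI
      rw [div_le_iff₀ (by linarith : (0:ℝ) < d - u)]
      nlinarith
    exact e1.trans e2
  -- claim 2 : slopes within [d,b] are ≥ s
  have c2 : ∀ u v, d ≤ u → u < v → v ≤ b → s ≤ (h v - h u) / (v - u) := by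
    intro u v hdu huv hvb
    have huI : u ∈ Set.Icc d b := ⟨hdu, huv.le.trans hvb⟩
    have hvI : v ∈ Set.Icc d b := ⟨hdu.trans huv.le, hvb⟩
    have hdv : d < v := lt_of_le_of_lt hdu huv
    have e1 : (h d - h v) / (d - v) ≤ (h u - h v) / (u - v) :=
      hh.secant_mono hvI (left_mem_Icc.2 hdb) huI (ne_of_lt hdv) (ne_of_lt huv) hdu
    have e2 : s ≤ (h d - h v) / (d - v) := by
      have := hsh v hvI
      rw [le_div_iff_of_neg (by linarith : d - v < 0)]
      nlinarith
    have e3 : (h u - h v) / (u - v) = (h v - h u) / (v - u) := by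
      rw [← neg_div_neg_eq]; ring_nf
    exact e2.trans (e3 ▸ e1)
  by_cases hzd : z ≤ d
  · have hyd : y ≤ d := hyz.le.trans hzd
    have hxd : x ≤ d := hxy.le.trans hyd
    rw [Hle x hxd, Hle y hyd, Hle z hzd]
    exact hf.slope_mono_adjacent ⟨hx.1, hxd⟩ ⟨hx.1.trans (hxy.trans hyz).le, hzd⟩ hxy hyz
  · push_neg at hzd
    by_cases hxd : x ≤ d
    · by_cases hyd : y ≤ d
      · rw [Hle x hxd, Hle y hyd, Hgt z hzd]
        rcases eq_or_lt_of_le hyd with hyd' | hyd'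
        · -- y = d
          refine (c1 x y hx.1 hxy hyd).trans ?_
          have := c2 y z hyd'.ge hyz hz.2
          calc s ≤ (h z - h y) / (z - y) := this
            _ = (h z - f y) / (z - y) := by rw [hyd', hfd]
        · -- y < d : slope f x y ≤ slope f y d ≤ cross slope y z
          have hyI : y ∈ Set.Icc a d := ⟨hx.1.trans hxy.le, hyd⟩
          have e_left : (f y - f x) / (y - x) ≤ (f d - f y) / (d - y) :=
            hf.slope_mono_adjacent ⟨hx.1, hxd⟩ (right_mem_Icc.2 had) hxy hyd'
          have e_right : (f d - f y) / (d - y) ≤ (h z - f y) / (z - y) := by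
            have hAB : (f d - f y) / (d - y) ≤ s := by
              rw [div_le_iff₀ (by linarith : (0:ℝ) < d - y)]
              have := hsf y hyI
              nlinarith
            have hD : h d + s * (z - d) ≤ h z := hsh z ⟨hzd.le, hz.2⟩
            rw [div_le_div_iff₀ (by linarith : (0:ℝ) < d - y)
              (by linarith : (0:ℝ) < z - y)]
            have hA : f d - f y ≤ s * (d - y) := by
              have := hsf y hyI; nlinarith
            nlinarith [mul_nonneg (sub_nonneg.2 hA) (by linarith : (0:ℝ) ≤ z - d),
              mul_nonneg (sub_nonneg.2 hD) (by linarith : (0:ℝ) ≤ d - y)]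
          exact e_left.trans e_right
      · push_neg at hyd
        rw [Hle x hxd, Hgt y hyd, Hgt z hzd]
        have hyb : y ≤ b := hyz.le.trans hz.2
        have e2 : (h y - h d) / (y - d) ≤ (h z - h y) / (z - y) :=
          hh.slope_mono_adjacent (left_mem_Icc.2 (hzd.le.trans hz.2)) ⟨hzd.le, hz.2⟩ hyd hyz
        have e1 : (h y - f x) / (y - x) ≤ (h y - h d) / (y - d) := by
          have hfx := hsf x ⟨hx.1, hxd⟩
          have hhy := hsh y ⟨hyd.le, hyb⟩
          rw [div_le_div_iff₀ (by linarith : (0:ℝ) < y - x) (by linarith : (0:ℝ) < y - d)]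
          nlinarith [mul_nonneg (sub_nonneg.2 (show s * (y - d) ≤ h y - h d by linarith))
            (sub_nonneg.2 hxd)]
        exact e1.trans e2
    · push_neg at hxd
      rw [Hgt x hxd, Hgt y (hxd.trans hxy), Hgt z hzd]
      exact hh.slope_mono_adjacent ⟨hxd.le, hx.2⟩ ⟨(hxd.trans (hxy.trans hyz)).le, hz.2⟩ hxy hyz

variable {g : ℝ → ℝ}

/-- If the two envelopes touch at `d ≤ ubar`, they agree on `[a,d]`. -/
lemma env_eq_of_touch (hg : Continuous g) {a ubar b : ℝ} (h1 : a < ubar) (h2 : ubar < b)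
    (m2 : ℝ → ℝ)
    (hm₂ : ∀ u ∈ Set.Icc a b, HasDerivWithinAt (convEnv a b g) (m2 u) (Set.Icc a b) u)
    {d : ℝ} (hd : d ∈ Set.Icc a ubar)
    (htouch : convEnv a ubar g d = convEnv a b g d) :
    ∀ u ∈ Set.Icc a d, convEnv a ubar g u = convEnv a b g u := by
  intro u hu
  set F1 := convEnv a ubar g with hF1
  set F2 := convEnv a b g with hF2
  have hab : a ≤ b := by linarith
  have haub : a ≤ ubar := h1.le
  have hdb : d ≤ b := by linarith [hd.2]
  have hd2 : d ∈ Set.Icc a b := ⟨hd.1, hdb⟩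
  have hconv2 := convEnv_convexOn hab hg
  have hconv1 := convEnv_convexOn haub hg
  have hsupp := support_line hconv2 hd2 (hm₂ d hd2)
  have hanti : ∀ v ∈ Set.Icc a ubar, F2 v ≤ F1 v := fun v hv =>
    convEnv_anti haub h2.le hg hv
  have hglue : ConvexOn ℝ (Set.Icc a b) (fun u => if u ≤ d then F1 u else F2 u) := by
    refine glue_convexOn (s := m2 d) hd.1 hdb
      (hconv1.subset (Icc_subset_Icc le_rfl hd.2) (convex_Icc _ _))
      (hconv2.subset (Icc_subset_Icc hd.1 le_rfl) (convex_Icc _ _)) htouch ?_ ?_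
    · intro x hxI
      have h1' := hsupp x (Icc_subset_Icc le_rfl hdb hxI)
      have h2' := hanti x (Icc_subset_Icc le_rfl hd.2 hxI)
      rw [htouch]; linarith
    · intro y hyI
      exact hsupp y (Icc_subset_Icc hd.1 le_rfl hyI)
  have hle : ∀ x ∈ Set.Icc a b, (if x ≤ d then F1 x else F2 x) ≤ g x := by
    intro x hxI
    split_ifs with hxd
    · exact convEnv_le haub hg ⟨hxI.1, hxd.trans hd.2⟩
    · exact convEnv_le hab hg hxI
  have hkey := le_convEnv hglue hle (show u ∈ Set.Icc a b from ⟨hu.1, hu.2.trans hdb⟩)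
  rw [if_pos hu.2] at hkey
  exact le_antisymm hkey (hanti u ⟨hu.1, hu.2.trans hd.2⟩)

end Glue

section Face

variable {g : ℝ → ℝ}

/-- If the envelope is strictly below `g` at `x`, then the tangent line at `x` touches
both the envelope and `g` at some point `y`. -/
lemma env_face_touch (hgc : Continuous g) {a b : ℝ} (hab : a < b)
    (m2 : ℝ → ℝ)
    (hm₂ : ∀ u ∈ Set.Icc a b, HasDerivWithinAt (convEnv a b g) (m2 u) (Set.Icc a b) u)
    {x : ℝ} (hx : x ∈ Set.Icc a b) (hlt : convEnv a b g x < g x) :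
    ∃ y ∈ Set.Icc a b,
      convEnv a b g y = convEnv a b g x + m2 x * (y - x) ∧ convEnv a b g y = g y := by
  set F := convEnv a b g with hF
  set L : ℝ → ℝ := fun u => F x + m2 x * (u - x) with hLdef
  have hconv := convEnv_convexOn hab.le hgc
  rw [← hF] at hconv
  have hsupp : ∀ u ∈ Set.Icc a b, L u ≤ F u := support_line hconv hx (hm₂ x hx)
  by_contra hcon
  push_neg at hcon
  have hcont : ContinuousOn F (Set.Icc a b) := fun u hu => (hm₂ u hu).continuousWithinAt
  have hLc : Continuous L := by fun_prop
  set θ : ℝ → ℝ := fun u => max (F u - L u) (g u - L u) with hθ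
  have hθc : ContinuousOn θ (Set.Icc a b) :=
    ContinuousOn.sup (hcont.sub hLc.continuousOn) (hgc.continuousOn.sub hLc.continuousOn)
  obtain ⟨u₀, hu₀I, hu₀min⟩ := isCompact_Icc.exists_isMinOn (nonempty_Icc.2 hab.le) hθc
  have hε : 0 < θ u₀ := by
    rcases eq_or_lt_of_le (hsupp u₀ hu₀I) with heq | hlt'
    · have hne := hcon u₀ hu₀I heq.symm
      have h1 : F u₀ < g u₀ := lt_of_le_of_ne (convEnv_le hab.le hgc hu₀I) hne
      exact lt_max_iff.2 (Or.inr (by linarith))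
    · exact lt_max_iff.2 (Or.inl (by linarith))
  set ε := θ u₀ with hεdef
  set h : ℝ → ℝ := fun u => max (F u) (L u + ε) with hhdef
  have hline : ConvexOn ℝ (Set.Icc a b) (fun u => L u + ε) := by
    have : (fun u => L u + ε) = fun u => (F x - m2 x * x + ε) + m2 x * u := by
      funext u; simp only [hLdef]; ring
    rw [this]
    exact convexOn_affine (convex_Icc a b)
  have hhconv : ConvexOn ℝ (Set.Icc a b) h := hconv.sup hline
  have hhle : ∀ u ∈ Set.Icc a b, h u ≤ g u := by
    intro u huI
    have hmin : ε ≤ θ u := isMinOn_iff.1 hu₀min u huI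
    have hFg : F u ≤ g u := convEnv_le hab.le hgc huI
    rcases le_total (F u - L u) (g u - L u) with hcase | hcase
    · have : ε ≤ g u - L u := by
        rw [hεdef] at hmin ⊢
        calc θ u₀ ≤ θ u := hmin
          _ = g u - L u := max_eq_right hcase
      exact max_le hFg (by linarith)
    · have : ε ≤ F u - L u := by
        calc ε ≤ θ u := hmin
          _ = F u - L u := max_eq_left hcase
      exact max_le hFg (by linarith)
  have hcontr := le_convEnv hhconv hhle hx
  have hgeq : F x + ε ≤ h x := by
    have : L x = F x := by simp [hLdef]
    calc F x + ε = L x + ε := by rw [this]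
      _ ≤ h x := le_max_right _ _
  have : h x ≤ F x := hcontr
  linarith

/-- Structure lemma: if the envelope on `[a,b]` is strictly below `g` on `(c,ubar]`,
then its derivative is constant on `[c,ubar]`. -/
lemma env_deriv_const (hgc : Continuous g) {a b c ubar : ℝ} (hab : a < b)
    (m2 : ℝ → ℝ)
    (hm₂ : ∀ u ∈ Set.Icc a b, HasDerivWithinAt (convEnv a b g) (m2 u) (Set.Icc a b) u)
    (hac : a ≤ c) (hcu : c < ubar) (hub : ubar < b)
    (hlt : ∀ u ∈ Set.Ioc c ubar, convEnv a b g u < g u) :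
    ∀ u ∈ Set.Icc c ubar, m2 u = m2 c := by
  set F := convEnv a b g with hF
  have hconv := convEnv_convexOn hab.le hgc
  rw [← hF] at hconv
  have hcont : ContinuousOn F (Set.Icc a b) := fun u hu => (hm₂ u hu).continuousWithinAt
  have hcI : c ∈ Set.Icc a b := ⟨hac, by linarith⟩
  have huI : ubar ∈ Set.Icc a b := ⟨by linarith, hub.le⟩
  have memI : ∀ {v : ℝ}, v ∈ Set.Icc c ubar → v ∈ Set.Icc a b := fun hv =>
    ⟨hac.trans hv.1, hv.2.trans hub.le⟩
  have mono : ∀ {p q : ℝ}, p ∈ Set.Icc a b → q ∈ Set.Icc a b → p ≤ q → m2 p ≤ m2 q := by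
    intro p q hp hq hpq
    rcases eq_or_lt_of_le hpq with rfl | h
    · exact le_rfl
    · exact deriv_mono hconv hp hq h (hm₂ p hp) (hm₂ q hq)
  -- key: derivative constant on an open interval propagates to closed endpoints
  have key : ∀ p q K, p ∈ Set.Icc a b → q ∈ Set.Icc a b → p < q →
      (∀ w ∈ Set.Ioo p q, m2 w = K) → m2 p = K ∧ m2 q = K := by
    intro p q K hp hq hpq hK
    set z₀ := (p + q) / 2 with hz₀def
    have hz₀ : z₀ ∈ Set.Ioo p q := ⟨by rw [hz₀def]; linarith, by rw [hz₀def]; linarith⟩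
    have hz₀I : z₀ ∈ Set.Icc a b := ⟨hp.1.trans hz₀.1.le, hz₀.2.le.trans hq.2⟩
    set ℓ : ℝ → ℝ := fun u => F z₀ + K * (u - z₀) with hℓdef
    have haff : ∀ u ∈ Set.Ioo p q, F u = ℓ u := by
      intro u hu
      have huI' : u ∈ Set.Icc a b := ⟨hp.1.trans hu.1.le, hu.2.le.trans hq.2⟩
      rcases lt_trichotomy u z₀ with h | h | h
      · have := affine_of_deriv_eq hconv huI' hz₀I h (hm₂ u huI') (hm₂ z₀ hz₀I)
          (by rw [hK u hu, hK z₀ hz₀])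
        have e := this z₀ (right_mem_Icc.2 h.le)
        rw [hK u hu] at e
        show F u = F z₀ + K * (u - z₀)
        linarith [e]
      · rw [h]; simp [hℓdef]
      · have := affine_of_deriv_eq hconv hz₀I huI' h (hm₂ z₀ hz₀I) (hm₂ u huI')
          (by rw [hK z₀ hz₀, hK u hu])
        have e := this u (right_mem_Icc.2 h.le)
        rw [hK z₀ hz₀] at e
        show F u = F z₀ + K * (u - z₀)
        linarith [e]
    have hℓc : Continuous ℓ := by fun_prop
    have hFp : F p = ℓ p := by
      have hne := ioo_nhds_neBot_left hpq
      have t1 : Filter.Tendsto F (𝓝[Set.Ioo p q] p) (𝓝 (F p)) :=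
        ((hcont p hp).mono (fun t ht => ⟨hp.1.trans ht.1.le, ht.2.le.trans hq.2⟩)).tendsto
      have t2 : Filter.Tendsto ℓ (𝓝[Set.Ioo p q] p) (𝓝 (ℓ p)) :=
        (hℓc.tendsto p).mono_left nhdsWithin_le_nhds
      have t3 : Filter.Tendsto F (𝓝[Set.Ioo p q] p) (𝓝 (ℓ p)) := by
        refine t2.congr' ?_
        filter_upwards [eventually_mem_nhdsWithin] with w hw
        exact (haff w hw).symm
      exact tendsto_nhds_unique t1 t3
    have hFq : F q = ℓ q := by
      have hne := ioo_nhds_neBot_right hpq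
      have t1 : Filter.Tendsto F (𝓝[Set.Ioo p q] q) (𝓝 (F q)) :=
        ((hcont q hq).mono (fun t ht => ⟨hp.1.trans ht.1.le, ht.2.le.trans hq.2⟩)).tendsto
      have t2 : Filter.Tendsto ℓ (𝓝[Set.Ioo p q] q) (𝓝 (ℓ q)) :=
        (hℓc.tendsto q).mono_left nhdsWithin_le_nhds
      have t3 : Filter.Tendsto F (𝓝[Set.Ioo p q] q) (𝓝 (ℓ q)) := by
        refine t2.congr' ?_
        filter_upwards [eventually_mem_nhdsWithin] with w hw
        exact (haff w hw).symm
      exact tendsto_nhds_unique t1 t3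
    have haff' : ∀ u ∈ Set.Icc p q, F u = (F z₀ - K * z₀) + K * u := by
      intro u hu
      rcases eq_or_lt_of_le hu.1 with h | h1
      · rw [← h, hFp]; simp only [hℓdef]; ring
      rcases eq_or_lt_of_le hu.2 with h | h2
      · rw [h, hFq]; simp only [hℓdef]; ring
      · rw [haff u ⟨h1, h2⟩]; simp only [hℓdef]; ring
    have hsub : Set.Icc p q ⊆ Set.Icc a b := Icc_subset_Icc hp.1 hq.2
    have := deriv_of_affine hpq hsub (hm₂ p hp) (hm₂ q hq) haff'
    exact this
  -- dichotomy via the face touching lemma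
  have dich : ∀ x ∈ Set.Ioo c ubar, m2 x = m2 c ∨ m2 x = m2 ubar := by
    intro x hx
    have hxI : x ∈ Set.Icc a b := memI ⟨hx.1.le, hx.2.le⟩
    obtain ⟨y, hyI, hyL, hyg⟩ := env_face_touch hgc hab m2 hm₂ hxI (hlt x ⟨hx.1, hx.2.le⟩)
    rw [← hF] at hyL hyg
    have hyn : y ∉ Set.Ioc c ubar := fun hy => absurd hyg (ne_of_lt (hlt y hy))
    have hsupp := support_line hconv hxI (hm₂ x hxI)
    have hy2 : y ≤ c ∨ ubar < y := by
      by_contra hcon2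
      push_neg at hcon2
      exact hyn ⟨hcon2.1, hcon2.2⟩
    have hFx' : F x = (F x - m2 x * x) + m2 x * x := by ring
    have hFy' : F y = (F x - m2 x * x) + m2 x * y := by rw [hyL]; ring
    rcases hy2 with hyc | hyu
    · -- y ≤ c < x : affine on [y,x] ⊇ [c,x]
      left
      have hyx : y < x := lt_of_le_of_lt hyc hx.1
      have haffyx : ∀ u ∈ Set.Icc y x, F u = (F x - m2 x * x) + m2 x * u := by
        intro u hu
        refine le_antisymm (convexOn_le_line hconv hyI hxI hyx hFy' hFx' u hu) ?_
        have huI' : u ∈ Set.Icc a b := ⟨hyI.1.trans hu.1, hu.2.trans hxI.2⟩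
        have := hsupp u huI'
        linarith [this]
      have happ : ∀ u ∈ Set.Icc c x, F u = (F x - m2 x * x) + m2 x * u := fun u hu =>
        haffyx u (Icc_subset_Icc hyc le_rfl hu)
      have := deriv_of_affine hx.1 (Icc_subset_Icc hcI.1 hxI.2) (hm₂ c hcI) (hm₂ x hxI) happ
      exact this.1.symm
    · -- x < ubar < y : affine on [x,y] ⊇ [x,ubar]
      right
      have hxy' : x < y := hx.2.trans hyu
      have haffxy : ∀ u ∈ Set.Icc x y, F u = (F x - m2 x * x) + m2 x * u := by
        intro u hu
        refine le_antisymm (convexOn_le_line hconv hxI hyI hxy' hFx' hFy' u hu) ?_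
        have huI' : u ∈ Set.Icc a b := ⟨hxI.1.trans hu.1, hu.2.trans hyI.2⟩
        have := hsupp u huI'
        linarith [this]
      have happ : ∀ u ∈ Set.Icc x ubar, F u = (F x - m2 x * x) + m2 x * u := fun u hu =>
        haffxy u (Icc_subset_Icc le_rfl hyu.le hu)
      have := deriv_of_affine hx.2 (Icc_subset_Icc hxI.1 huI.2) (hm₂ x hxI) (hm₂ ubar huI) happ
      exact this.2.symm
  -- conclude
  have hmain : m2 ubar = m2 c := by
    by_contra hne
    by_cases hS : ∃ x, x ∈ Set.Ioo c ubar ∧ m2 x = m2 c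
    · obtain ⟨x₀, hx₀, hx₀e⟩ := hS
      set S := {x | x ∈ Set.Ioo c ubar ∧ m2 x = m2 c} with hSdef
      have hSne : S.Nonempty := ⟨x₀, hx₀, hx₀e⟩
      have hbdd : BddAbove S := ⟨ubar, fun t ht => ht.1.2.le⟩
      set xs := sSup S with hxsdef
      have hxs1 : c < xs := lt_of_lt_of_le hx₀.1 (le_csSup hbdd ⟨hx₀, hx₀e⟩)
      have hxs2 : xs ≤ ubar := csSup_le hSne (fun t ht => ht.1.2.le)
      have hxsI : xs ∈ Set.Icc a b := ⟨hac.trans hxs1.le, hxs2.trans hub.le⟩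
      have hleft : ∀ w ∈ Set.Ioo c xs, m2 w = m2 c := by
        intro w hw
        obtain ⟨t, htS, hwt⟩ := exists_lt_of_lt_csSup hSne hw.2
        have hwI : w ∈ Set.Icc a b := ⟨hac.trans hw.1.le, ((hw.2.trans_le hxs2).le.trans hub.le)⟩
        have htI : t ∈ Set.Icc a b := memI ⟨htS.1.1.le, htS.1.2.le⟩
        have h1 : m2 w ≤ m2 c := by rw [← htS.2]; exact mono hwI htI hwt.le
        have h2 : m2 c ≤ m2 w := mono hcI hwI hw.1.le
        linarith
      have hxc : m2 xs = m2 c := (key c xs (m2 c) hcI hxsI hxs1 hleft).2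
      rcases eq_or_lt_of_le hxs2 with heq | hlt2
      · rw [heq] at hxc; exact hne hxc
      · have hright : ∀ w ∈ Set.Ioo xs ubar, m2 w = m2 ubar := by
          intro w hw
          have hwIoo : w ∈ Set.Ioo c ubar := ⟨hxs1.trans hw.1, hw.2⟩
          rcases dich w hwIoo with h | h
          · exact absurd (le_csSup hbdd ⟨hwIoo, h⟩) (not_le.2 hw.1)
          · exact h
        have hxu : m2 xs = m2 ubar := (key xs ubar (m2 ubar) hxsI huI hlt2 hright).1
        rw [hxc] at hxu
        exact hne hxu.symm
    · push_neg at hS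
      have hall : ∀ w ∈ Set.Ioo c ubar, m2 w = m2 ubar := fun w hw =>
        (dich w hw).resolve_left (hS w hw)
      exact hne (key c ubar (m2 ubar) hcI huI hcu hall).1.symm
  intro u hu
  rcases eq_or_lt_of_le hu.1 with h | h1
  · rw [← h]
  rcases eq_or_lt_of_le hu.2 with h | h2
  · rw [h]; exact hmain
  · have e1 : m2 u ≤ m2 ubar := mono (memI hu) huI hu.2
    have e2 : m2 c ≤ m2 u := mono hcI (memI hu) hu.1
    exact le_antisymm (hmain ▸ e1) e2

end Face

theorem stmt4 (g : ℝ → ℝ) (hg : ContDiff ℝ 1 g) (a ubar b : ℝ)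
    (h1 : a < ubar) (h2 : ubar < b) (m₁ m₂ : ℝ → ℝ)
    (hm₁ : ∀ u ∈ Set.Icc a ubar,
      HasDerivWithinAt (convEnv a ubar g) (m₁ u) (Set.Icc a ubar) u)
    (hm₂ : ∀ u ∈ Set.Icc a b,
      HasDerivWithinAt (convEnv a b g) (m₂ u) (Set.Icc a b) u) :
    ∀ u₁ ∈ Set.Icc a ubar, ∀ u₂ ∈ Set.Icc a ubar, u₁ < u₂ →
      m₂ u₂ - m₂ u₁ ≤ m₁ u₂ - m₁ u₁ := by
  intro u₁ hu₁ u₂ hu₂ h12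
  have hgc : Continuous g := hg.continuous
  set F1 := convEnv a ubar g with hF1
  set F2 := convEnv a b g with hF2
  have hab : a < b := h1.trans h2
  have sub1 : Set.Icc a ubar ⊆ Set.Icc a b := Icc_subset_Icc le_rfl h2.le
  have hu₁b : u₁ ∈ Set.Icc a b := sub1 hu₁
  have hu₂b : u₂ ∈ Set.Icc a b := sub1 hu₂
  have hanti : ∀ v ∈ Set.Icc a ubar, F2 v ≤ F1 v := fun v hv =>
    convEnv_anti h1.le h2.le hgc hv
  have conv1 : ConvexOn ℝ (Set.Icc a ubar) F1 := convEnv_convexOn h1.le hgc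
  have hm1mono : m₁ u₁ ≤ m₁ u₂ := deriv_mono conv1 hu₁ hu₂ h12 (hm₁ u₁ hu₁) (hm₁ u₂ hu₂)
  have hau₂ : a < u₂ := lt_of_le_of_lt hu₁.1 h12
  by_cases htouch : F1 u₂ = F2 u₂
  · -- the envelopes agree on [a,u₂]; derivatives agree at u₁ and u₂
    have heq := env_eq_of_touch hgc h1 h2 m₂ hm₂ hu₂ htouch
    have e1 : m₁ u₁ = m₂ u₁ :=
      deriv_eq_of_eqOn hau₂ (Icc_subset_Icc le_rfl hu₂.2) (Icc_subset_Icc le_rfl hu₂b.2)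
        ⟨hu₁.1, h12.le⟩ (hm₁ u₁ hu₁) (hm₂ u₁ hu₁b) heq
    have e2 : m₁ u₂ = m₂ u₂ :=
      deriv_eq_of_eqOn hau₂ (Icc_subset_Icc le_rfl hu₂.2) (Icc_subset_Icc le_rfl hu₂b.2)
        (right_mem_Icc.2 hau₂.le) (hm₁ u₂ hu₂) (hm₂ u₂ hu₂b) heq
    linarith
  · -- contact set and its supremum
    set C := {v | v ∈ Set.Icc a ubar ∧ F1 v = F2 v} with hC
    have hCa : a ∈ C := by
      refine ⟨left_mem_Icc.2 h1.le, ?_⟩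
      rw [hF1, hF2, convEnv_left_endpoint h1.le hgc, convEnv_left_endpoint hab.le hgc]
    have hcont1 : ContinuousOn F1 (Set.Icc a ubar) := fun v hv => (hm₁ v hv).continuousWithinAt
    have hcont2 : ContinuousOn F2 (Set.Icc a ubar) := fun v hv =>
      ((hm₂ v (sub1 hv)).continuousWithinAt).mono sub1
    have hCc : IsClosed C := by
      have : C = Set.Icc a ubar ∩ (fun v => F1 v - F2 v) ⁻¹' {0} := by
        ext v
        simp only [hC, Set.mem_setOf_eq, Set.mem_inter_iff, Set.mem_preimage,
          Set.mem_singleton_iff]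
        constructor
        · rintro ⟨hv, he⟩; exact ⟨hv, by rw [he]; ring⟩
        · rintro ⟨hv, he⟩; exact ⟨hv, by linarith [he]⟩
      rw [this]
      exact (hcont1.sub hcont2).preimage_isClosed_of_isClosed isClosed_Icc isClosed_singleton
    have hbdd : BddAbove C := ⟨ubar, fun t ht => ht.1.2⟩
    set c := sSup C with hc
    have hcC : c ∈ C := hCc.csSup_mem ⟨a, hCa⟩ hbdd
    have hceq := env_eq_of_touch hgc h1 h2 m₂ hm₂ hcC.1 hcC.2
    have hcu₂ : c < u₂ := by
      by_contra hcon
      push_neg at hcon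
      exact htouch (hceq u₂ ⟨hu₂.1, hcon⟩)
    have hflt : ∀ v ∈ Set.Ioc c ubar, F2 v < g v := by
      intro v hv
      have hvI : v ∈ Set.Icc a ubar := ⟨hcC.1.1.trans hv.1.le, hv.2⟩
      by_contra hcon
      push_neg at hcon
      have h3 : F2 v ≤ F1 v := hanti v hvI
      have h4 : F1 v ≤ g v := convEnv_le h1.le hgc hvI
      have h5 : F2 v ≤ g v := convEnv_le hab.le hgc (sub1 hvI)
      have h6 : F1 v = F2 v := le_antisymm (by linarith) h3
      exact absurd (le_csSup hbdd ⟨hvI, h6⟩) (not_le.2 hv.1)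
    have hkey := env_deriv_const hgc hab m₂ hm₂ hcC.1.1 (lt_of_lt_of_le hcu₂ hu₂.2) h2 hflt
    have e2 : m₂ u₂ = m₂ c := hkey u₂ ⟨hcu₂.le, hu₂.2⟩
    by_cases hu₁c : c ≤ u₁
    · have e1 : m₂ u₁ = m₂ c := hkey u₁ ⟨hu₁c, hu₁.2⟩
      rw [e1, e2]
      linarith
    · push_neg at hu₁c
      have hac : a < c := lt_of_le_of_lt hu₁.1 hu₁c
      have hcb : c ∈ Set.Icc a b := sub1 hcC.1
      have e1 : m₁ u₁ = m₂ u₁ :=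
        deriv_eq_of_eqOn hac (Icc_subset_Icc le_rfl hcC.1.2) (Icc_subset_Icc le_rfl hcb.2)
          ⟨hu₁.1, hu₁c.le⟩ (hm₁ u₁ hu₁) (hm₂ u₁ hu₁b) hceq
      have e3 : m₁ c = m₂ c :=
        deriv_eq_of_eqOn hac (Icc_subset_Icc le_rfl hcC.1.2) (Icc_subset_Icc le_rfl hcb.2)
          (right_mem_Icc.2 hac.le) (hm₁ c hcC.1) (hm₂ c hcb) hceq
      have e4 : m₁ c ≤ m₁ u₂ :=
        deriv_mono conv1 hcC.1 hu₂ hcu₂ (hm₁ c hcC.1) (hm₁ u₂ hu₂)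
      linarith
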